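/- Under the partition condition (equivalence classes G₁,…,G_m of equal size with equal test statistic values within blocks, distinct values across blocks, a.s.), the statistic D = #{g ∈ G : T(gX) ≥ T(X)} has under H₀ the uniform distribution on {#G/m, 2·#G/m, …, #G}; equivalently D/#G is uniform on {1/m, 2/m, …, 1}. -/

import Mathlib

open MeasureTheory Finset
open scoped ENNReal

lemma comb_count {G : Type*} [Fintype G] (f : G → ℝ) (m s : ℕ) (hm : 0 < m) (hs : 0 < s)
    (c : G → Fin m)
    (H : ∀ g g' : G, f g = f g' ↔ c g = c g')
    (hsize : ∀ i : Fin m, (Finset.univ.filter fun g : G => c g = i).card = s)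
    (k : Fin m) :
    (Finset.univ.filter fun g : G =>
      (Finset.univ.filter fun b : G => f b ≥ f g).card = (k.1 + 1) * s).card = s := by
  classical
  -- c is surjective
  have hsurj : ∀ i : Fin m, ∃ g : G, c g = i := by
    intro i
    have := hsize i
    have hne : (Finset.univ.filter fun g : G => c g = i).Nonempty := by
      rw [← Finset.card_pos, this]; exact hs
    obtain ⟨g, hg⟩ := hne
    exact ⟨g, (Finset.mem_filter.mp hg).2⟩
  choose σ hσ using hsurj
  set v : Fin m → ℝ := fun i => f (σ i) with hv
  have hfv : ∀ g : G, f g = v (c g) := by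
    intro g
    rw [hv]
    exact (H g (σ (c g))).mpr (hσ (c g)).symm
  have hvinj : Function.Injective v := by
    intro i j hij
    have := (H (σ i) (σ j)).mp hij
    rwa [hσ, hσ] at this
  set r : Fin m → ℕ := fun i => (Finset.univ.filter fun j : Fin m => v j ≥ v i).card with hr
  -- N g = s * r (c g)
  have hN : ∀ g : G, (Finset.univ.filter fun b : G => f b ≥ f g).card = s * r (c g) := by
    intro g
    have hmap : ∀ b ∈ (Finset.univ.filter fun b : G => f b ≥ f g), c b ∈
        (Finset.univ.filter fun j : Fin m => v j ≥ v (c g)) := by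
      intro b hb
      simp only [Finset.mem_filter, Finset.mem_univ, true_and] at hb ⊢
      rwa [hfv b, hfv g] at hb
    rw [Finset.card_eq_sum_card_fiberwise hmap]
    have : ∀ j ∈ (Finset.univ.filter fun j : Fin m => v j ≥ v (c g)),
        ((Finset.univ.filter fun b : G => f b ≥ f g).filter fun b => c b = j).card = s := by
      intro j hj
      simp only [Finset.mem_filter, Finset.mem_univ, true_and] at hj
      rw [Finset.filter_filter]
      rw [← hsize j]
      congr 1
      apply Finset.filter_congr
      intro b _
      constructor
      · rintro ⟨_, h⟩; exact h
      · intro h; refine ⟨?_, h⟩; rw [hfv b, hfv g, h]; exact hj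
    rw [Finset.sum_congr rfl this, Finset.sum_const, smul_eq_mul, hr, mul_comm]
  -- r is injective
  have hrinj : Function.Injective r := by
    intro i j hij
    by_contra hne
    have hvne : v i ≠ v j := fun h => hne (hvinj h)
    rcases lt_or_gt_of_ne hvne with h | h
    · -- v i < v j : r j < r i
      have hsub : (Finset.univ.filter fun l : Fin m => v l ≥ v j) ⊂
          (Finset.univ.filter fun l : Fin m => v l ≥ v i) := by
        constructor
        · intro l hl
          simp only [Finset.mem_filter, Finset.mem_univ, true_and] at hl ⊢
          exact le_trans h.le hl
        · intro hcon
          have : i ∈ (Finset.univ.filter fun l : Fin m => v l ≥ v i) := by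
            simp
          have := hcon this
          simp only [Finset.mem_filter, Finset.mem_univ, true_and] at this
          exact absurd this (not_le.mpr h)
      exact (Finset.card_lt_card hsub).ne' hij
    · have hsub : (Finset.univ.filter fun l : Fin m => v l ≥ v i) ⊂
          (Finset.univ.filter fun l : Fin m => v l ≥ v j) := by
        constructor
        · intro l hl
          simp only [Finset.mem_filter, Finset.mem_univ, true_and] at hl ⊢
          exact le_trans h.le hl
        · intro hcon
          have : j ∈ (Finset.univ.filter fun l : Fin m => v l ≥ v j) := by simp
          have := hcon this
          simp only [Finset.mem_filter, Finset.mem_univ, true_and] at this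
          exact absurd this (not_le.mpr h)
      exact (Finset.card_lt_card hsub).ne hij
  -- range of r is Icc 1 m
  have hrange : ∀ i : Fin m, r i ∈ Finset.Icc 1 m := by
    intro i
    simp only [Finset.mem_Icc]
    constructor
    · have : i ∈ (Finset.univ.filter fun j : Fin m => v j ≥ v i) := by simp
      exact Finset.card_pos.mpr ⟨i, this⟩
    · calc r i ≤ (Finset.univ : Finset (Fin m)).card := Finset.card_filter_le _ _
        _ = m := by simp
  -- image of r = Icc 1 m, so there is exactly one i0 with r i0 = k+1
  have himg : Finset.image r Finset.univ = Finset.Icc 1 m := by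
    apply Finset.eq_of_subset_of_card_le
    · intro x hx
      simp only [Finset.mem_image] at hx
      obtain ⟨i, _, hi⟩ := hx
      exact hi ▸ hrange i
    · rw [Finset.card_image_of_injective _ hrinj]
      simp [Nat.card_Icc]
  have hk1 : (k.1 + 1) ∈ Finset.Icc 1 m := by
    simp only [Finset.mem_Icc]
    exact ⟨Nat.le_add_left 1 k.1, k.2⟩
  rw [← himg, Finset.mem_image] at hk1
  obtain ⟨i0, _, hi0⟩ := hk1
  -- now count
  have : (Finset.univ.filter fun g : G =>
      (Finset.univ.filter fun b : G => f b ≥ f g).card = (k.1 + 1) * s) =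
      (Finset.univ.filter fun g : G => c g = i0) := by
    apply Finset.filter_congr
    intro g _
    rw [hN g]
    constructor
    · intro h
      have : r (c g) = k.1 + 1 := by
        have := h
        rw [mul_comm] at this
        exact Nat.eq_of_mul_eq_mul_right hs this
      exact hrinj (this.trans hi0.symm)
    · intro h
      rw [h, hi0, mul_comm]
  rw [this, hsize]


/-- under the partition condition, the statistic
`D = #{g ∈ G : T(gX) ≥ T(X)}` is uniformly distributed on
`{#G/m, 2·#G/m, …, #G}` under the null hypothesis. -/
theorem D_uniform_under_partition_condition
    {Ω 𝒳 G : Type*} [MeasurableSpace Ω] [MeasurableSpace 𝒳]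
    [Group G] [Fintype G] [MulAction G 𝒳]
    (P : Measure Ω) [IsProbabilityMeasure P]
    (X : Ω → 𝒳) (hX : Measurable X)
    (hG : ∀ g : G, Measurable fun x : 𝒳 => g • x)
    (T : 𝒳 → ℝ) (hT : Measurable T)
    (hinv : ∀ g : G,
      Measure.map (fun ω => fun a : G => T (a • X ω)) P =
        Measure.map (fun ω => fun a : G => T (a • g • X ω)) P)
    -- the partition: `c g` is the index of the block containing `g`;
    -- all blocks have size `s`, so `#G = m * s`
    (m s : ℕ) (hm : 0 < m) (c : G → Fin m)
    (hc1 : c 1 = ⟨0, hm⟩)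
    (hsize : ∀ i : Fin m, (Finset.univ.filter fun g : G => c g = i).card = s)
    (hcard : Fintype.card G = m * s)
    (hcond : ∀ᵐ ω ∂P, ∀ g g' : G, T (g • X ω) = T (g' • X ω) ↔ c g = c g') :
    ∀ i : Fin m,
      (P {ω | (Finset.univ.filter fun g : G => T (g • X ω) ≥ T (X ω)).card
          = (i.1 + 1) * s}).toReal = 1 / m := by
  classical
  intro i
  have hGpos : 0 < Fintype.card G := Fintype.card_pos
  have hs : 0 < s := by
    rcases Nat.eq_zero_or_pos s with h | h
    · rw [h, mul_zero] at hcard; omega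
    · exact h
  set k : ℕ := (i.1 + 1) * s with hk
  -- the counting functions
  set N : Ω → G → ℕ := fun ω g => (Finset.univ.filter fun b : G => T (b • X ω) ≥ T (g • X ω)).card with hNdef
  set A : G → Set Ω := fun g => (fun ω => N ω g) ⁻¹' {k} with hAdef
  have hmeasN : ∀ g : G, Measurable fun ω => N ω g := by
    intro g
    have heq : (fun ω => N ω g) = fun ω => ∑ b : G, if T (g • X ω) ≤ T (b • X ω) then 1 else 0 := by
      funext ω
      simp only [hNdef, Finset.card_filter, ge_iff_le]
    rw [heq]
    exact Finset.measurable_sum _ fun b _ =>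
      Measurable.ite (measurableSet_le (hT.comp ((hG g).comp hX)) (hT.comp ((hG b).comp hX)))
        measurable_const measurable_const
  have hmeasA : ∀ g : G, MeasurableSet (A g) := fun g =>
    (hmeasN g) (measurableSet_singleton _)
  -- invariance : P (A g) = P (A 1)
  set Φ : (G → ℝ) → ℕ := fun y => (Finset.univ.filter fun b : G => y b ≥ y 1).card with hΦdef
  have hmeasΦ : Measurable Φ := by
    have heq : Φ = fun y => ∑ b : G, if y 1 ≤ y b then 1 else 0 := by
      funext y
      simp only [hΦdef, Finset.card_filter, ge_iff_le]
    rw [heq]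
    exact Finset.measurable_sum _ fun b _ =>
      Measurable.ite (measurableSet_le (measurable_pi_apply 1) (measurable_pi_apply b))
        measurable_const measurable_const
  have hS : MeasurableSet (Φ ⁻¹' {k}) := hmeasΦ (measurableSet_singleton _)
  have hY : Measurable fun ω => fun a : G => T (a • X ω) :=
    measurable_pi_lambda _ fun a => hT.comp ((hG a).comp hX)
  have hPA : ∀ g : G, P (A g) = P (A 1) := by
    intro g
    have hYg : Measurable fun ω => fun a : G => T (a • g • X ω) :=
      measurable_pi_lambda _ fun a => hT.comp ((hG a).comp ((hG g).comp hX))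
    have h1 : P (A 1) = Measure.map (fun ω => fun a : G => T (a • X ω)) P (Φ ⁻¹' {k}) := by
      rw [Measure.map_apply hY hS]
      congr 1
    have hcards : ∀ ω, Φ (fun a : G => T (a • g • X ω)) = N ω g := by
      intro ω
      simp only [hΦdef, hNdef, one_smul]
      apply Finset.card_bij (fun b _ => b * g)
      · intro b hb
        simp only [Finset.mem_filter, Finset.mem_univ, true_and, ge_iff_le] at hb ⊢
        rwa [mul_smul]
      · intro b _ b' _ h
        exact mul_right_cancel h
      · intro b' hb'
        simp only [Finset.mem_filter, Finset.mem_univ, true_and, ge_iff_le] at hb'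
        refine ⟨b' * g⁻¹, ?_, by group⟩
        simp only [Finset.mem_filter, Finset.mem_univ, true_and, ge_iff_le]
        rwa [mul_smul, inv_smul_smul]
    have h2 : P (A g) = Measure.map (fun ω => fun a : G => T (a • g • X ω)) P (Φ ⁻¹' {k}) := by
      rw [Measure.map_apply hYg hS]
      congr 1
      ext ω
      simp only [hAdef, Set.mem_preimage, Set.mem_singleton_iff, hcards ω]
    rw [h1, h2, hinv g]
  -- a.e. sum of indicators equals s
  have key : ∀ᵐ ω ∂P, (∑ g : G, Set.indicator (A g) (fun _ => (1 : ℝ≥0∞)) ω) = (s : ℝ≥0∞) := by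
    filter_upwards [hcond] with ω hω
    have hcount := comb_count (fun g => T (g • X ω)) m s hm hs c hω hsize i
    have step1 : (∑ g : G, Set.indicator (A g) (fun _ => (1 : ℝ≥0∞)) ω)
        = ((Finset.univ.filter fun g : G => ω ∈ A g).card : ℝ≥0∞) := by
      rw [Finset.card_filter]
      push_cast
      apply Finset.sum_congr rfl
      intro g _
      by_cases h : ω ∈ A g <;> simp [h, Set.indicator_apply]
    rw [step1]
    have : (Finset.univ.filter fun g : G => ω ∈ A g)
        = (Finset.univ.filter fun g : G =>
            (Finset.univ.filter fun b : G => T (b • X ω) ≥ T (g • X ω)).card = (i.1 + 1) * s) := by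
      apply Finset.filter_congr
      intro g _
      simp only [hAdef, hNdef, Set.mem_preimage, Set.mem_singleton_iff, hk]
    rw [this, hcount]
  -- sum of measures equals s
  have hsum : ∑ g : G, P (A g) = (s : ℝ≥0∞) := by
    have h1 : ∀ g : G, P (A g) = ∫⁻ ω, Set.indicator (A g) (fun _ => (1 : ℝ≥0∞)) ω ∂P := by
      intro g
      rw [lintegral_indicator (hmeasA g)]
      simp
    calc ∑ g : G, P (A g)
        = ∑ g : G, ∫⁻ ω, Set.indicator (A g) (fun _ => (1 : ℝ≥0∞)) ω ∂P :=
          Finset.sum_congr rfl fun g _ => h1 g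
      _ = ∫⁻ ω, (∑ g : G, Set.indicator (A g) (fun _ => (1 : ℝ≥0∞)) ω) ∂P :=
          (lintegral_finset_sum _ fun g _ =>
            (measurable_const.indicator (hmeasA g))).symm
      _ = ∫⁻ _, (s : ℝ≥0∞) ∂P := lintegral_congr_ae key
      _ = (s : ℝ≥0∞) := by simp [lintegral_const]
  have hconst : ∑ g : G, P (A g) = (Fintype.card G : ℝ≥0∞) * P (A 1) := by
    rw [Finset.sum_congr rfl fun g _ => hPA g, Finset.sum_const, Finset.card_univ,
      nsmul_eq_mul]
  have hfin : ((m * s : ℕ) : ℝ≥0∞) * P (A 1) = (s : ℝ≥0∞) := by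
    rw [← hcard, ← hconst, hsum]
  have hne : ((m * s : ℕ) : ℝ≥0∞) ≠ 0 := by
    simp only [ne_eq, Nat.cast_eq_zero]
    positivity
  have hnetop : ((m * s : ℕ) : ℝ≥0∞) ≠ ⊤ := ENNReal.natCast_ne_top _
  have hPA1 : P (A 1) = (s : ℝ≥0∞) / ((m * s : ℕ) : ℝ≥0∞) :=
    (ENNReal.eq_div_iff hne hnetop).mpr hfin
  have hgoal : {ω | (Finset.univ.filter fun g : G => T (g • X ω) ≥ T (X ω)).card
      = (i.1 + 1) * s} = A 1 := by
    ext ω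
    simp only [hAdef, hNdef, Set.mem_preimage, Set.mem_singleton_iff, Set.mem_setOf_eq,
      one_smul, hk]
  rw [hgoal, hPA1, ENNReal.toReal_div]
  simp only [ENNReal.toReal_natCast]
  rw [Nat.cast_mul]
  have hm' : (m:ℝ) ≠ 0 := by positivity
  have hs' : (s:ℝ) ≠ 0 := by positivity
  field_simp
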